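/- Let R be an invariant lub-rule class with singletons, and let E be a dlubpo generated by R. Then E fulfills axiom S10 if and only if for every dlubpo D, the evaluation map eval : (D ⇒ E) × D → E is continuous, where D ⇒ E is the pointwise function space dlubpo. Moreover these are equivalent to: for every dlubpo D, (D ⇒ E) = (D ⇒* E). -/

import Mathlib

universe u

/-- A set is directed: non-empty and upward directed. -/
def Dir {α : Type u} [Preorder α] (A : Set α) : Prop :=
  A.Nonempty ∧ DirectedOn (· ≤ ·) A

/-- The dlubpo axioms for a convergence relation: natural sets are directed
with the designated element as lub, and the singleton axiom S3 holds. -/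
def DlubpoAx {α : Type u} [PartialOrder α] (conv : Set α → α → Prop) : Prop :=
  (∀ (A : Set α) (a : α), conv A a → Dir A ∧ IsLUB A a) ∧ ∀ a : α, conv {a} a

/-- Continuity: monotone and preserving natural lubs. -/
def IsCont {α β : Type u} [PartialOrder α] [PartialOrder β]
    (convD : Set α → α → Prop) (convE : Set β → β → Prop) (f : α → β) : Prop :=
  Monotone f ∧ ∀ (A : Set α) (a : α), convD A a → convE (f '' A) (f a)

/-- Well-founded deductions from a lub-rule system on a partial order. -/
inductive Deduc {α : Type u} (R : Set (Set α) → Set α → Prop) (P : Set (Set α)) :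
    Set α → Prop
  | base {A : Set α} : A ∈ P → Deduc R P A
  | rule {Q : Set (Set α)} {A : Set α} : (∀ B ∈ Q, Deduc R P B) → R Q A → Deduc R P A

/-- Validity of a lub-rule `(P ↝ A)` on a partial order, including
well-formedness: the members of `P` and `A` have lubs, and every monotone map
preserving the lubs of the members of `P` preserves the lub of `A`. -/
def ValidRule {α : Type u} [PartialOrder α] (P : Set (Set α)) (A : Set α) : Prop :=
  (∀ B ∈ P, ∃ b : α, IsLUB B b) ∧ (∃ a : α, IsLUB A a) ∧
  ∀ (β : Type u) [PartialOrder β] (f : α → β), Monotone f →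
    (∀ B ∈ P, ∀ b : α, IsLUB B b → IsLUB (f '' B) (f b)) →
    ∀ a : α, IsLUB A a → IsLUB (f '' A) (f a)

/-- An invariant lub-rule class with singletons: a class of valid lub-rules,
one rule system per partial order, containing all singleton rules
`(∅ ↝ {x})`, and invariant: the image of a rule under a monotone map
preserving the lubs of the pattern is derivable. -/
structure LubRuleClass : Type (u + 1) where
  rules : ∀ (β : Type u) [PartialOrder β], Set (Set β) → Set β → Prop
  valid : ∀ (β : Type u) [PartialOrder β] (P : Set (Set β)) (A : Set β),
    rules β P A → ValidRule P A
  singletons : ∀ (β : Type u) [PartialOrder β] (x : β), rules β ∅ {x}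
  invariant : ∀ (β γ : Type u) [PartialOrder β] [PartialOrder γ]
    (P : Set (Set β)) (A : Set β), rules β P A →
    ∀ f : β → γ, Monotone f →
    (∀ B ∈ P, ∀ b : β, IsLUB B b → IsLUB (f '' B) (f b)) →
    Deduc (rules γ) ((Set.image f) '' P) (f '' A)

/-- The `R`-completion of a dlubpo: natural are exactly the directed sets in
the closure of the natural sets under the lub-rule system induced by `R`. -/
def RComp (R : LubRuleClass.{u}) {α : Type u} [PartialOrder α]
    (conv : Set α → α → Prop) : Set α → α → Prop :=
  fun A a => Dir A ∧ IsLUB A a ∧ Deduc (R.rules α) {B : Set α | ∃ b : α, conv B b} A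

/-- The product convergence on `C × D`. -/
def ConvProd {γ α : Type u} [PartialOrder γ] [PartialOrder α]
    (convC : Set γ → γ → Prop) (convD : Set α → α → Prop)
    (A : Set (γ × α)) (p : γ × α) : Prop :=
  Dir A ∧ convC (Prod.fst '' A) p.1 ∧ convD (Prod.snd '' A) p.2

/-- The pointwise convergence of the function space dlubpo `D ⇒ E`. -/
def ConvPt {α β : Type u} [PartialOrder α] [PartialOrder β]
    (convD : Set α → α → Prop) (convE : Set β → β → Prop)
    (F : Set {f : α → β // IsCont convD convE f})
    (f : {f : α → β // IsCont convD convE f}) : Prop :=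
  Dir F ∧ ∀ d : α, convE ((fun g => g.1 d) '' F) (f.1 d)

/-- The convergence of the general function dlubpo `D ⇒* E`. -/
def ConvStar {α β : Type u} [PartialOrder α] [PartialOrder β]
    (convD : Set α → α → Prop) (convE : Set β → β → Prop)
    (F : Set {f : α → β // IsCont convD convE f})
    (f : {f : α → β // IsCont convD convE f}) : Prop :=
  Dir F ∧
  ∀ A : Set ({f : α → β // IsCont convD convE f} × α),
    Dir A → Prod.fst '' A = F →
    ∀ d : α, convD (Prod.snd '' A) d →
      convE ((fun p => p.1.1 p.2) '' A) (f.1 d)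

/-- Axiom S10. -/
def S10ax {β : Type u} [PartialOrder β] (conv : Set β → β → Prop) : Prop :=
  ∀ (I : Type u) [PartialOrder I], Nonempty I →
    (∀ i j : I, ∃ k : I, i ≤ k ∧ j ≤ k) →
    ∀ (y : I → I → β) (x z : I → β) (u : β),
      (∀ i : I, Monotone (y i)) → (∀ j : I, Monotone fun i => y i j) →
      (∀ i : I, conv (Set.range (y i)) (x i)) → conv (Set.range x) u →
      (∀ j : I, conv (Set.range fun i => y i j) (z j)) → conv (Set.range z) u →
      conv (Set.range fun i => y i i) u

section Helpers

variable {β : Type u} [PartialOrder β] {convE : Set β → β → Prop}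

/-- Image of the coercion range over a subtype. -/
lemma range_val_image {γ δ : Type u} (A : Set γ) (h : γ → δ) :
    Set.range (fun q : A => h q.1) = h '' A := by
  ext c
  constructor
  · rintro ⟨q, rfl⟩; exact ⟨q.1, q.2, rfl⟩
  · rintro ⟨p, hp, rfl⟩; exact ⟨⟨p, hp⟩, rfl⟩

/-- S10 implies continuity of evaluation. -/
lemma lem12 (hS : S10ax convE)
    {α : Type u} [PartialOrder α] (convD : Set α → α → Prop) (hD : DlubpoAx convD) :
    IsCont (ConvProd (ConvPt convD convE) convD) convE
      (fun p : {f : α → β // IsCont convD convE f} × α => p.1.1 p.2) := by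
  constructor
  · intro p q hpq
    exact le_trans (p.1.2.1 hpq.2) (hpq.1 q.2)
  · rintro A ⟨f, d⟩ ⟨hADir, hAfst, hAsnd⟩
    haveI : Nonempty A := hADir.1.to_subtype
    have hdirI : ∀ i j : A, ∃ k : A, i ≤ k ∧ j ≤ k := by
      intro i j
      obtain ⟨k, hk, h1, h2⟩ := hADir.2 i.1 i.2 j.1 j.2
      exact ⟨⟨k, hk⟩, h1, h2⟩
    have key := hS A ‹Nonempty A› hdirI
      (fun i j => i.1.1.1 j.1.2) (fun i => i.1.1.1 d) (fun j => f.1 j.1.2) (f.1 d)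
      (fun i q q' hqq => i.1.1.2.1 (Subtype.coe_le_coe.2 hqq).2)
      (fun j p p' hpp => (Subtype.coe_le_coe.2 (Subtype.coe_le_coe.2 hpp).1) j.1.2)
      ?_ ?_ ?_ ?_
    · have e : Set.range (fun i : A => i.1.1.1 i.1.2)
          = (fun p : _ × α => p.1.1 p.2) '' A := range_val_image A (fun p => p.1.1 p.2)
      rw [e] at key
      exact key
    · -- rows converge
      intro i
      have e : Set.range (fun j : A => i.1.1.1 j.1.2) = i.1.1.1 '' (Prod.snd '' A) := by
        rw [range_val_image A (fun p : _ × α => i.1.1.1 p.2), Set.image_image]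
      rw [e]
      exact i.1.1.2.2 _ _ hAsnd
    · -- limits of rows converge
      have e : Set.range (fun i : A => i.1.1.1 d)
          = (fun g : {f : α → β // IsCont convD convE f} => g.1 d) '' (Prod.fst '' A) := by
        rw [range_val_image A (fun p : _ × α => p.1.1 d), Set.image_image]
      rw [e]
      exact hAfst.2 d
    · -- columns converge
      intro j
      have e : Set.range (fun i : A => i.1.1.1 j.1.2)
          = (fun g : {f : α → β // IsCont convD convE f} => g.1 j.1.2) '' (Prod.fst '' A) := by
        rw [range_val_image A (fun p : _ × α => p.1.1 j.1.2), Set.image_image]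
      rw [e]
      exact hAfst.2 j.1.2
    · -- limits of columns converge
      have e : Set.range (fun j : A => f.1 j.1.2) = f.1 '' (Prod.snd '' A) := by
        rw [range_val_image A (fun p : _ × α => f.1 p.2), Set.image_image]
      rw [e]
      exact f.2.2 _ _ hAsnd

/-- Continuity of evaluation implies `D ⇒ E` = `D ⇒* E`. -/
lemma lem23
    (h : ∀ (α : Type u) [PartialOrder α] (convD : Set α → α → Prop), DlubpoAx convD →
      IsCont (ConvProd (ConvPt convD convE) convD) convE
        (fun p : {f : α → β // IsCont convD convE f} × α => p.1.1 p.2))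
    {α : Type u} [PartialOrder α] (convD : Set α → α → Prop) (hD : DlubpoAx convD)
    (F : Set {f : α → β // IsCont convD convE f}) (f : {f : α → β // IsCont convD convE f}) :
    ConvPt convD convE F f ↔ ConvStar convD convE F f := by
  constructor
  · intro hPt
    refine ⟨hPt.1, ?_⟩
    intro A hADir hAfst d hAsnd
    exact (h α convD hD).2 A (f, d) ⟨hADir, by rw [hAfst]; exact hPt, hAsnd⟩
  · rintro ⟨hFdir, hStar⟩
    refine ⟨hFdir, ?_⟩
    intro d
    have hne : F.Nonempty := hFdir.1
    have hADir : Dir (F ×ˢ ({d} : Set α)) := by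
      obtain ⟨g, hg⟩ := hne
      refine ⟨⟨(g, d), hg, rfl⟩, ?_⟩
      rintro ⟨g1, e1⟩ ⟨hg1, he1⟩ ⟨g2, e2⟩ ⟨hg2, he2⟩
      obtain ⟨k, hk, hk1, hk2⟩ := hFdir.2 g1 hg1 g2 hg2
      refine ⟨(k, d), ⟨hk, rfl⟩, ⟨hk1, le_of_eq he1⟩, ⟨hk2, le_of_eq he2⟩⟩
    have hfst : Prod.fst '' (F ×ˢ ({d} : Set α)) = F :=
      Set.fst_image_prod F (Set.singleton_nonempty d)
    have hsnd : convD (Prod.snd '' (F ×ˢ ({d} : Set α))) d := by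
      rw [Set.snd_image_prod hne]
      exact hD.2 d
    have key := hStar (F ×ˢ ({d} : Set α)) hADir hfst d hsnd
    have e : (fun p : {f : α → β // IsCont convD convE f} × α => p.1.1 p.2) ''
        (F ×ˢ ({d} : Set α)) = (fun g : {f : α → β // IsCont convD convE f} => g.1 d) '' F := by
      ext c
      constructor
      · rintro ⟨⟨g, e1⟩, ⟨hg, he1⟩, rfl⟩
        exact ⟨g, hg, by rw [show e1 = d from he1]⟩
      · rintro ⟨g, hg, rfl⟩
        exact ⟨(g, d), ⟨hg, rfl⟩, rfl⟩
    rw [e] at key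
    exact key

/-- `D ⇒ E` = `D ⇒* E` for all `D` implies S10. -/
lemma lem31 (hE : DlubpoAx convE)
    (h : ∀ (α : Type u) [PartialOrder α] (convD : Set α → α → Prop), DlubpoAx convD →
      ∀ (F : Set {f : α → β // IsCont convD convE f})
        (f : {f : α → β // IsCont convD convE f}),
        ConvPt convD convE F f ↔ ConvStar convD convE F f) :
    S10ax convE := by
  intro I _ hne hdir y x z u hy1 hy2 hx hux hz huz
  classical
  obtain ⟨i₀⟩ := hne
  set convD : Set (WithTop I) → WithTop I → Prop := fun A a =>
    Dir A ∧ IsLUB A a ∧ (A = {a} ∨ A = Set.range (fun j : I => (j : WithTop I))) with hconvD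
  have hD : DlubpoAx convD := by
    constructor
    · intro A a hc; exact ⟨hc.1, hc.2.1⟩
    · intro a
      exact ⟨⟨⟨a, rfl⟩, directedOn_singleton a⟩, isLUB_singleton, Or.inl rfl⟩
  set ext : (I → β) → β → WithTop I → β :=
    fun g b dd => WithTop.recTopCoe b g dd with hext
  have hxlub : ∀ i, IsLUB (Set.range (y i)) (x i) := fun i => (hE.1 _ _ (hx i)).2
  have hzlub : ∀ j, IsLUB (Set.range fun i => y i j) (z j) := fun j => (hE.1 _ _ (hz j)).2
  have hulub : IsLUB (Set.range z) u := (hE.1 _ _ huz).2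
  have hzm : Monotone z := by
    intro j j' hjj
    refine (hzlub j).2 ?_
    rintro c ⟨i, rfl⟩
    exact le_trans (hy1 i hjj) ((hzlub j').1 ⟨i, rfl⟩)
  -- key continuity lemma for extensions
  have key : ∀ (g : I → β) (b : β), Monotone g → convE (Set.range g) b →
      IsCont convD convE (ext g b) := by
    intro g b hmono hconv
    have hb : IsLUB (Set.range g) b := (hE.1 _ _ hconv).2
    have hmon : Monotone (ext g b) := by
      intro p q hpq
      induction q using WithTop.recTopCoe with
      | top =>
        induction p using WithTop.recTopCoe with
        | top => exact le_refl _
        | coe j => simpa [hext] using hb.1 ⟨j, rfl⟩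
      | coe j' =>
        obtain ⟨j, rfl, hjj⟩ := WithTop.le_coe_iff.1 hpq
        simpa [hext] using hmono hjj
    refine ⟨hmon, ?_⟩
    rintro A a ⟨hADir, hALUB, hcase | hcase⟩
    · subst hcase
      rw [Set.image_singleton]
      exact hE.2 _
    · subst hcase
      have himg : ext g b '' Set.range (fun j : I => (j : WithTop I)) = Set.range g := by
        rw [← Set.range_comp]
        ext c
        constructor
        · rintro ⟨j, rfl⟩; exact ⟨j, rfl⟩
        · rintro ⟨j, rfl⟩; exact ⟨j, rfl⟩
      rw [himg]
      have hval : ext g b a = b := by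
        induction a using WithTop.recTopCoe with
        | top => simp [hext]
        | coe j0 =>
          have hj0 : ∀ j : I, j ≤ j0 := fun j => WithTop.coe_le_coe.1 (hALUB.1 ⟨j, rfl⟩)
          have hg0 : IsLUB (Set.range g) (g j0) := by
            constructor
            · rintro c ⟨j, rfl⟩; exact hmono (hj0 j)
            · intro c hc; exact hc ⟨j0, rfl⟩
          simpa [hext] using (hb.unique hg0).symm
      rw [hval]
      exact hconv
  have fcont : ∀ i, IsCont convD convE (ext (y i) (x i)) := fun i => key _ _ (hy1 i) (hx i)
  have zcont : IsCont convD convE (ext z u) := key z u hzm huz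
  set F : Set {f : WithTop I → β // IsCont convD convE f} :=
    Set.range (fun i => (⟨ext (y i) (x i), fcont i⟩ : {f // IsCont convD convE f})) with hF
  set fz : {f : WithTop I → β // IsCont convD convE f} := ⟨ext z u, zcont⟩ with hfz
  have hle : ∀ i i', i ≤ i' → ∀ dd, ext (y i) (x i) dd ≤ ext (y i') (x i') dd := by
    intro i i' hii dd
    induction dd using WithTop.recTopCoe with
    | top =>
      simp only [hext, WithTop.recTopCoe_top]
      refine (hxlub i).2 ?_
      rintro c ⟨j, rfl⟩
      exact le_trans (hy2 j hii) ((hxlub i').1 ⟨j, rfl⟩)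
    | coe j => simpa [hext] using hy2 j hii
  have hFdir : Dir F := by
    refine ⟨⟨_, ⟨i₀, rfl⟩⟩, ?_⟩
    rintro _ ⟨i, rfl⟩ _ ⟨i', rfl⟩
    obtain ⟨k, hk1, hk2⟩ := hdir i i'
    exact ⟨_, ⟨k, rfl⟩, hle i k hk1, hle i' k hk2⟩
  have himgF : ∀ dd : WithTop I,
      (fun g : {f : WithTop I → β // IsCont convD convE f} => g.1 dd) '' F
        = Set.range (fun i => ext (y i) (x i) dd) := by
    intro dd
    ext c
    constructor
    · rintro ⟨g, ⟨i, rfl⟩, rfl⟩; exact ⟨i, rfl⟩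
    · rintro ⟨i, rfl⟩; exact ⟨_, ⟨i, rfl⟩, rfl⟩
  have hPt : ConvPt convD convE F fz := by
    refine ⟨hFdir, ?_⟩
    intro dd
    rw [himgF dd]
    induction dd using WithTop.recTopCoe with
    | top =>
      have e : (fun i => ext (y i) (x i) (⊤ : WithTop I)) = x := by
        funext i; simp [hext]
      rw [e]
      have e2 : fz.1 ⊤ = u := by simp [hfz, hext]
      rw [e2]
      exact hux
    | coe j =>
      have e : (fun i => ext (y i) (x i) ((j : WithTop I))) = fun i => y i j := by
        funext i; simp [hext]
      rw [e]
      have e2 : fz.1 (j : WithTop I) = z j := by simp [hfz, hext]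
      rw [e2]
      exact hz j
  have hStar : ConvStar convD convE F fz := (h (WithTop I) convD hD F fz).1 hPt
  set A : Set ({f : WithTop I → β // IsCont convD convE f} × WithTop I) :=
    Set.range (fun i => ((⟨ext (y i) (x i), fcont i⟩ : {f // IsCont convD convE f}),
      (i : WithTop I))) with hA
  have hADir : Dir A := by
    refine ⟨⟨_, ⟨i₀, rfl⟩⟩, ?_⟩
    rintro _ ⟨i, rfl⟩ _ ⟨i', rfl⟩
    obtain ⟨k, hk1, hk2⟩ := hdir i i'
    exact ⟨_, ⟨k, rfl⟩, ⟨hle i k hk1, WithTop.coe_le_coe.2 hk1⟩,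
      ⟨hle i' k hk2, WithTop.coe_le_coe.2 hk2⟩⟩
  have hfst : Prod.fst '' A = F := by
    rw [hA, hF, ← Set.range_comp]
    rfl
  have hsnd : Prod.snd '' A = Set.range (fun j : I => (j : WithTop I)) := by
    rw [hA, ← Set.range_comp]
    rfl
  have hdlub : ∃ dd : WithTop I,
      IsLUB (Set.range (fun j : I => (j : WithTop I))) dd ∧ ext z u dd = u := by
    by_cases hmax : ∃ i0 : I, ∀ j : I, j ≤ i0
    · obtain ⟨i0, hi0⟩ := hmax
      refine ⟨(i0 : WithTop I), ⟨?_, ?_⟩, ?_⟩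
      · rintro c ⟨j, rfl⟩; exact WithTop.coe_le_coe.2 (hi0 j)
      · intro c hc; exact hc ⟨i0, rfl⟩
      · have hz0 : IsLUB (Set.range z) (z i0) := by
          constructor
          · rintro c ⟨j, rfl⟩; exact hzm (hi0 j)
          · intro c hc; exact hc ⟨i0, rfl⟩
        simpa [hext] using (hulub.unique hz0).symm
    · refine ⟨⊤, ⟨fun c _ => le_top, ?_⟩, by simp [hext]⟩
      intro c hc
      induction c using WithTop.recTopCoe with
      | top => exact le_refl _
      | coe i1 =>
        exact (hmax ⟨i1, fun j => WithTop.coe_le_coe.1 (hc ⟨j, rfl⟩)⟩).elim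
  obtain ⟨dd, hddlub, hddval⟩ := hdlub
  have hconvDd : convD (Prod.snd '' A) dd := by
    rw [hsnd]
    refine ⟨⟨⟨(i₀ : WithTop I), ⟨i₀, rfl⟩⟩, ?_⟩, hddlub, Or.inr rfl⟩
    rintro _ ⟨i, rfl⟩ _ ⟨i', rfl⟩
    obtain ⟨k, hk1, hk2⟩ := hdir i i'
    exact ⟨_, ⟨k, rfl⟩, WithTop.coe_le_coe.2 hk1, WithTop.coe_le_coe.2 hk2⟩
  have hfin := hStar.2 A hADir hfst dd hconvDd
  have himg2 : (fun p : {f : WithTop I → β // IsCont convD convE f} × WithTop I => p.1.1 p.2)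
      '' A = Set.range (fun i => y i i) := by
    rw [hA, ← Set.range_comp]
    ext c
    constructor
    · rintro ⟨i, rfl⟩
      exact ⟨i, by simp [hext]⟩
    · rintro ⟨i, rfl⟩
      exact ⟨i, by simp [hext]⟩
  have hval : fz.1 dd = u := hddval
  rw [himg2, hval] at hfin
  exact hfin

end Helpers

/-- For `E` a dlubpo generated by an invariant lub-rule class `R` with
singletons: `E` fulfills axiom S10 iff for every dlubpo `D` the evaluation
map `(D ⇒ E) × D → E` is continuous, and iff for every dlubpo `D` the
pointwise function space `D ⇒ E` coincides with the general function dlubpo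
`D ⇒* E`. -/
theorem stmt15 (R : LubRuleClass.{u}) {β : Type u} [PartialOrder β]
    (convE : Set β → β → Prop) (hE : DlubpoAx convE)
    (hgen : ∀ (A : Set β) (a : β), RComp R convE A a ↔ convE A a) :
    (S10ax convE ↔
      ∀ (α : Type u) [PartialOrder α] (convD : Set α → α → Prop), DlubpoAx convD →
        IsCont (ConvProd (ConvPt convD convE) convD) convE
          (fun p : {f : α → β // IsCont convD convE f} × α => p.1.1 p.2)) ∧
    (S10ax convE ↔
      ∀ (α : Type u) [PartialOrder α] (convD : Set α → α → Prop), DlubpoAx convD →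
        ∀ (F : Set {f : α → β // IsCont convD convE f})
          (f : {f : α → β // IsCont convD convE f}),
          ConvPt convD convE F f ↔ ConvStar convD convE F f) := by
  have h12 : S10ax convE →
      ∀ (α : Type u) [PartialOrder α] (convD : Set α → α → Prop), DlubpoAx convD →
        IsCont (ConvProd (ConvPt convD convE) convD) convE
          (fun p : {f : α → β // IsCont convD convE f} × α => p.1.1 p.2) :=
    fun hS α _ convD hD => lem12 hS convD hD
  have h23 : (∀ (α : Type u) [PartialOrder α] (convD : Set α → α → Prop), DlubpoAx convD →
      IsCont (ConvProd (ConvPt convD convE) convD) convE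
        (fun p : {f : α → β // IsCont convD convE f} × α => p.1.1 p.2)) →
      ∀ (α : Type u) [PartialOrder α] (convD : Set α → α → Prop), DlubpoAx convD →
        ∀ (F : Set {f : α → β // IsCont convD convE f})
          (f : {f : α → β // IsCont convD convE f}),
          ConvPt convD convE F f ↔ ConvStar convD convE F f :=
    fun h α _ convD hD F f => lem23 h convD hD F f
  have h31 := lem31 (convE := convE) hE
  exact ⟨⟨h12, fun h2 => h31 (h23 h2)⟩, ⟨fun h1 => h23 (h12 h1), h31⟩⟩
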